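/- Let H be Hermitian with spectrum contained in [a,b] ⊂ ℝ and let z ∈ ℂ with dist(z,[a,b]) > 0. Then for indices i,j at graph distance d(i,j) = m in the graph of H, |(H − zI)^{-1}(i,j)| ≤ C·ρ^{-m}, where ρ > 1 and C > 0 depend only on z, a, b (explicitly, ρ = |w + √(w²−1)| with w = (2z − (b+a))/(b−a)). -/

import Mathlib

open Matrix

/-- The (simple) graph of a matrix `H`: an edge between distinct `u, v` whenever
`H` has a nonzero entry at `(u,v)` or `(v,u)`. -/
def matGraph {n : ℕ} (H : Matrix (Fin n) (Fin n) ℂ) : SimpleGraph (Fin n) where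
  Adj u v := u ≠ v ∧ (H u v ≠ 0 ∨ H v u ≠ 0)
  symm := ⟨fun _ _ h => ⟨h.1.symm, h.2.symm⟩⟩
  loopless := ⟨fun _ h => h.1 rfl⟩

noncomputable def Complex.abs : AbsoluteValue ℂ ℝ := NormedField.toAbsoluteValue ℂ

lemma Complex.norm_eq_abs (z : ℂ) : ‖z‖ = Complex.abs z := rfl

lemma Complex.abs_conj (z : ℂ) : Complex.abs ((starRingEnd ℂ) z) = Complex.abs z :=
  Complex.norm_conj z

lemma Complex.abs_two : Complex.abs 2 = 2 := Complex.norm_two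

lemma Complex.abs_ofReal (r : ℝ) : Complex.abs (r : ℂ) = |r| := Complex.norm_real r

lemma Complex.sq_abs (z : ℂ) : Complex.abs z ^ 2 = Complex.normSq z := Complex.sq_norm z

lemma Complex.abs_re_le_abs (z : ℂ) : |z.re| ≤ Complex.abs z := Complex.abs_re_le_norm z

lemma Complex.abs_exp_ofReal_mul_I (x : ℝ) : Complex.abs (Complex.exp (x * Complex.I)) = 1 :=
  Complex.norm_exp_ofReal_mul_I x

open Polynomial

lemma natDegree_T_le : ∀ m : ℕ, (Polynomial.Chebyshev.T ℂ (m : ℤ)).natDegree ≤ m := by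
  intro m
  induction m using Nat.strong_induction_on with
  | _ m ih =>
    match m with
    | 0 => simp [Polynomial.Chebyshev.T_zero]
    | 1 => simpa [Polynomial.Chebyshev.T_one] using Polynomial.natDegree_X_le
    | (m+2) =>
      have hc : ((m+2 : ℕ) : ℤ) = (m : ℤ) + 2 := by push_cast; ring
      rw [hc, Polynomial.Chebyshev.T_add_two]
      refine (Polynomial.natDegree_sub_le _ _).trans ?_
      have h1 : (Polynomial.Chebyshev.T ℂ ((m:ℤ) + 1)).natDegree ≤ m + 1 := by
        have := ih (m+1) (by omega)
        rwa [show (((m+1):ℕ):ℤ) = (m:ℤ)+1 by push_cast; ring] at this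
      have h0 := ih m (by omega)
      have h2 : (2 * Polynomial.X * Polynomial.Chebyshev.T ℂ ((m:ℤ)+1)).natDegree ≤ m + 2 := by
        refine (Polynomial.natDegree_mul_le).trans ?_
        have : (2 * Polynomial.X : ℂ[X]).natDegree ≤ 1 :=
          (Polynomial.natDegree_mul_le).trans (by simp)
        omega
      simp only [max_le_iff]
      exact ⟨h2, h0.trans (by omega)⟩

lemma pow_entry_zero {n : ℕ} (H X : Matrix (Fin n) (Fin n) ℂ)
    (hoff : ∀ u v, u ≠ v → X u v ≠ 0 → H u v ≠ 0) (i : Fin n) :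
    ∀ (k : ℕ) (l : Fin n), (∀ w : (matGraph H).Walk i l, k < w.length) → (X ^ k) i l = 0 := by
  intro k
  induction k with
  | zero =>
    intro l h
    have hne : i ≠ l := by
      rintro rfl
      exact absurd (h SimpleGraph.Walk.nil) (by simp)
    simp [Matrix.one_apply_ne hne]
  | succ k ih =>
    intro l h
    rw [pow_succ, Matrix.mul_apply]
    apply Finset.sum_eq_zero
    intro t _
    by_cases hXt : X t l = 0
    · rw [hXt, mul_zero]
    · by_cases htl : t = l
      · subst htl
        rw [ih t (fun w => Nat.lt_of_succ_lt (h w)), zero_mul]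
      · have hadj : (matGraph H).Adj t l := ⟨htl, Or.inl (hoff t l htl hXt)⟩
        have hw : ∀ w : (matGraph H).Walk i t, k < w.length := by
          intro w
          have := h (w.concat hadj)
          rwa [SimpleGraph.Walk.length_concat, Nat.succ_lt_succ_iff] at this
        rw [ih t hw, zero_mul]

lemma entry_bound {n : ℕ} (U : Matrix (Fin n) (Fin n) ℂ) (hU : U * Uᴴ = 1)
    (g : Fin n → ℂ) (B : ℝ) (hB : ∀ k, Complex.abs (g k) ≤ B) (hB0 : 0 ≤ B) (i j : Fin n) :
    Complex.abs ((U * Matrix.diagonal g * Uᴴ) i j) ≤ B := by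
  have hrow : ∀ i : Fin n, ∑ k, Complex.abs (U i k) ^ 2 = 1 := by
    intro i
    have h1 : (U * Uᴴ) i i = 1 := by rw [hU, Matrix.one_apply_eq]
    rw [Matrix.mul_apply] at h1
    have h2 : ∀ k : Fin n, U i k * Uᴴ k i = ((Complex.abs (U i k) ^ 2 : ℝ) : ℂ) := by
      intro k
      rw [Matrix.conjTranspose_apply]
      rw [show star (U i k) = (starRingEnd ℂ) (U i k) from rfl, Complex.mul_conj, Complex.sq_abs]
    rw [Finset.sum_congr rfl (fun k _ => h2 k), ← Complex.ofReal_sum] at h1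
    exact_mod_cast h1
  have hent : (U * Matrix.diagonal g * Uᴴ) i j = ∑ k, U i k * g k * (starRingEnd ℂ) (U j k) := by
    rw [Matrix.mul_apply]
    exact Finset.sum_congr rfl fun k _ => by
      rw [Matrix.mul_diagonal, Matrix.conjTranspose_apply]; rfl
  rw [hent]
  have habs : ∀ k : Fin n, Complex.abs (U i k * g k * (starRingEnd ℂ) (U j k))
      ≤ B * (Complex.abs (U i k) * Complex.abs (U j k)) := by
    intro k
    rw [_root_.map_mul, _root_.map_mul, Complex.abs_conj]
    have h1 : 0 ≤ Complex.abs (U i k) := Complex.abs.nonneg _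
    have h2 : 0 ≤ Complex.abs (U j k) := Complex.abs.nonneg _
    have h3 := mul_le_mul_of_nonneg_right (mul_le_mul_of_nonneg_left (hB k) h1) h2
    nlinarith [h3]
  calc Complex.abs (∑ k, U i k * g k * (starRingEnd ℂ) (U j k))
      ≤ ∑ k, Complex.abs (U i k * g k * (starRingEnd ℂ) (U j k)) :=
        Complex.abs.sum_le _ _
    _ ≤ ∑ k, B * (Complex.abs (U i k) * Complex.abs (U j k)) :=
        Finset.sum_le_sum fun k _ => habs k
    _ = B * ∑ k, Complex.abs (U i k) * Complex.abs (U j k) := by rw [Finset.mul_sum]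
    _ ≤ B * 1 := by
        refine mul_le_mul_of_nonneg_left ?_ hB0
        have hcs := Finset.sum_mul_sq_le_sq_mul_sq Finset.univ
          (fun k => Complex.abs (U i k)) (fun k => Complex.abs (U j k))
        rw [hrow i, hrow j, one_mul] at hcs
        have hnn : (0:ℝ) ≤ ∑ k, Complex.abs (U i k) * Complex.abs (U j k) :=
          Finset.sum_nonneg fun k _ => mul_nonneg (Complex.abs.nonneg _) (Complex.abs.nonneg _)
        nlinarith
    _ = B := mul_one B



noncomputable def chebP (u : ℂ) (m : ℕ) : Polynomial ℂ :=
  Polynomial.C (2*u/(1-u^2)) *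
    ((∑ k ∈ Finset.range m, Polynomial.C (2*u^k) * Polynomial.Chebyshev.T ℂ (k : ℤ)) - 1)


lemma chebP_natDegree_le (u : ℂ) (m : ℕ) : (chebP u (m+1)).natDegree ≤ m := by
  refine (Polynomial.natDegree_mul_le).trans ?_
  rw [Polynomial.natDegree_C, zero_add]
  refine (Polynomial.natDegree_sub_le _ _).trans ?_
  rw [Polynomial.natDegree_one]
  simp only [max_le_iff]
  refine ⟨?_, Nat.zero_le m⟩
  apply Polynomial.natDegree_sum_le_of_forall_le
  intro k hk
  refine (Polynomial.natDegree_mul_le).trans ?_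
  rw [Polynomial.natDegree_C, zero_add]
  exact (natDegree_T_le k).trans (by simpa using Nat.lt_succ_iff.mp (Finset.mem_range.mp hk))

lemma chebP_approx (u : ℂ) (hu0 : u ≠ 0) (hu1 : Complex.abs u < 1) (m : ℕ) (x : ℝ)
    (hx : x ∈ Set.Icc (-1:ℝ) 1) :
    Complex.abs (((u + u⁻¹)/2 - (x:ℂ))⁻¹ - (chebP u m).eval (x:ℂ))
      ≤ 4 * Complex.abs u / (Complex.abs (1 - u^2) * (1 - Complex.abs u)) * Complex.abs u ^ m := by
  set θ := Real.arccos x with hθ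
  have hcos : Real.cos θ = x := Real.cos_arccos hx.1 hx.2
  set v : ℂ := Complex.exp (θ * Complex.I) with hvdef
  have hv : Complex.abs v = 1 := Complex.abs_exp_ofReal_mul_I θ
  have hv0 : v ≠ 0 := by
    intro h; rw [h] at hv; simp at hv
  have hxv : (x:ℂ) = (v + v⁻¹)/2 := by
    rw [← hcos, Complex.ofReal_cos, Complex.cos, ← Complex.exp_neg, hvdef]
    ring_nf
  have hTk : ∀ k : ℕ, (Polynomial.Chebyshev.T ℂ (k:ℤ)).eval (x:ℂ) = (v^k + (v⁻¹)^k)/2 := by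
    intro k
    rw [← hcos, Complex.ofReal_cos, Polynomial.Chebyshev.T_complex_cos, Complex.cos]
    have h1 : ((k:ℤ):ℂ) * (θ:ℂ) * Complex.I = (k:ℕ) * ((θ:ℂ) * Complex.I) := by push_cast; ring
    have h2 : -(((k:ℤ):ℂ) * (θ:ℂ)) * Complex.I = -((k:ℕ) * ((θ:ℂ) * Complex.I)) := by
      push_cast; ring
    rw [h1, h2, Complex.exp_neg, Complex.exp_nat_mul, ← inv_pow]
  -- nonvanishing
  have habsuv : Complex.abs (u * v) = Complex.abs u := by rw [_root_.map_mul, hv, mul_one]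
  have habsuv' : Complex.abs (u * v⁻¹) = Complex.abs u := by
    rw [_root_.map_mul, _root_.map_inv₀, hv, inv_one, mul_one]
  have huv1 : u * v ≠ 1 := fun h => by rw [h] at habsuv; simp at habsuv; linarith
  have huv1' : u * v⁻¹ ≠ 1 := fun h => by rw [h] at habsuv'; simp at habsuv'; linarith
  have h1uv : (1:ℂ) - u*v ≠ 0 := fun h => huv1 (by linear_combination -h)
  have h1uv' : (1:ℂ) - u*v⁻¹ ≠ 0 := fun h => huv1' (by linear_combination -h)
  have hu2 : (1:ℂ) - u^2 ≠ 0 := by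
    intro h
    have : u^2 = 1 := by linear_combination -h
    have h2 : Complex.abs u ^ 2 = 1 := by
      rw [← _root_.map_pow, this, _root_.map_one]
    nlinarith [Complex.abs.nonneg u]
  have hwx : (u + u⁻¹)/2 - (x:ℂ) = (1 - u*v)*(1 - u*v⁻¹)/(2*u) := by
    rw [hxv]
    field_simp
    ring
  have hwx0 : (u + u⁻¹)/2 - (x:ℂ) ≠ 0 := by
    rw [hwx]
    exact div_ne_zero (mul_ne_zero h1uv h1uv')
      (by simp [hu0])
  have heval : (chebP u m).eval (x:ℂ)
      = (2*u/(1-u^2)) * ((∑ k ∈ Finset.range m, (u*v)^k)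
          + (∑ k ∈ Finset.range m, (u*v⁻¹)^k) - 1) := by
    rw [chebP]
    simp only [Polynomial.eval_mul, Polynomial.eval_C, Polynomial.eval_sub, Polynomial.eval_one,
      Polynomial.eval_finset_sum]
    congr 2
    rw [← Finset.sum_add_distrib]
    refine Finset.sum_congr rfl fun k _ => ?_
    rw [hTk k, mul_pow, mul_pow]
    ring
  have hvt : v * v⁻¹ = 1 := mul_inv_cancel₀ hv0
  have hgA : (∑ k ∈ Finset.range m, (u*v)^k) = (1 - (u*v)^m)/(1 - u*v) := by
    rw [geom_sum_eq huv1 m, ← neg_sub ((u*v)^m) 1, ← neg_sub (u*v) 1, neg_div_neg_eq]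
  have hgB : (∑ k ∈ Finset.range m, (u*v⁻¹)^k) = (1 - (u*v⁻¹)^m)/(1 - u*v⁻¹) := by
    rw [geom_sum_eq huv1' m, ← neg_sub ((u*v⁻¹)^m) 1, ← neg_sub (u*v⁻¹) 1, neg_div_neg_eq]
  have hbr : ((u + u⁻¹)/2 - (x:ℂ))⁻¹ = (2*u/(1-u^2)) * ((1-u*v)⁻¹ + (1-u*v⁻¹)⁻¹ - 1) := by
    rw [hwx, inv_div, inv_add_inv h1uv h1uv',
      div_sub_one (mul_ne_zero h1uv h1uv')]
    have h2 : (1-u*v) + (1-u*v⁻¹) - (1-u*v)*(1-u*v⁻¹) = 1 - u^2 := by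
      linear_combination (-(u^2) : ℂ) * hvt
    rw [h2, div_mul_div_comm, mul_comm (1-u^2) ((1-u*v)*(1-u*v⁻¹)),
      mul_div_mul_right _ _ hu2]
  have hkey : ((u + u⁻¹)/2 - (x:ℂ))⁻¹ - (chebP u m).eval (x:ℂ)
      = (2*u/(1-u^2)) * ((u*v)^m/(1-u*v) + (u*v⁻¹)^m/(1-u*v⁻¹)) := by
    rw [heval, hgA, hgB, hbr, ← mul_sub]
    congr 1
    simp only [div_eq_mul_inv]
    ring
  rw [hkey]
  have hα : 0 < Complex.abs u := Complex.abs.pos hu0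
  have hD : 0 < Complex.abs (1 - u^2) := Complex.abs.pos hu2
  have h1α : 0 < 1 - Complex.abs u := by linarith
  have hd1 : 1 - Complex.abs u ≤ Complex.abs (1 - u*v) := by
    have := norm_sub_norm_le (1:ℂ) (u*v)
    simp only [Complex.norm_eq_abs, _root_.map_one] at this
    rw [habsuv] at this
    exact this
  have hd2 : 1 - Complex.abs u ≤ Complex.abs (1 - u*v⁻¹) := by
    have := norm_sub_norm_le (1:ℂ) (u*v⁻¹)
    simp only [Complex.norm_eq_abs, _root_.map_one] at this
    rw [habsuv'] at this
    exact this
  rw [_root_.map_mul, _root_.map_div₀, _root_.map_mul]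
  have hterm1 : Complex.abs ((u*v)^m/(1-u*v)) ≤ Complex.abs u ^ m / (1 - Complex.abs u) := by
    rw [_root_.map_div₀, _root_.map_pow, habsuv]
    exact div_le_div_of_nonneg_left (by positivity) h1α hd1 |>.trans_eq rfl
  have hterm2 : Complex.abs ((u*v⁻¹)^m/(1-u*v⁻¹)) ≤ Complex.abs u ^ m / (1 - Complex.abs u) := by
    rw [_root_.map_div₀, _root_.map_pow, habsuv']
    exact div_le_div_of_nonneg_left (by positivity) h1α hd2
  have habs2 : Complex.abs 2 = 2 := by norm_num [Complex.abs_two]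
  have hsum : Complex.abs ((u*v)^m/(1-u*v) + (u*v⁻¹)^m/(1-u*v⁻¹))
      ≤ 2 * (Complex.abs u ^ m / (1 - Complex.abs u)) := by
    calc Complex.abs ((u*v)^m/(1-u*v) + (u*v⁻¹)^m/(1-u*v⁻¹))
        ≤ Complex.abs ((u*v)^m/(1-u*v)) + Complex.abs ((u*v⁻¹)^m/(1-u*v⁻¹)) :=
          Complex.abs.add_le _ _
      _ ≤ _ := by linarith
  calc Complex.abs 2 * Complex.abs u / Complex.abs (1-u^2)
        * Complex.abs ((u*v)^m/(1-u*v) + (u*v⁻¹)^m/(1-u*v⁻¹))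
      ≤ 2 * Complex.abs u / Complex.abs (1-u^2)
        * (2 * (Complex.abs u ^ m / (1 - Complex.abs u))) := by
        rw [habs2]
        exact mul_le_mul_of_nonneg_left hsum (by positivity)
    _ = 4 * Complex.abs u / (Complex.abs (1 - u^2) * (1 - Complex.abs u)) * Complex.abs u ^ m := by
        field_simp
        ring


lemma inv_bound (u : ℂ) (hu0 : u ≠ 0) (hu1 : Complex.abs u < 1) (x : ℝ)
    (hx : x ∈ Set.Icc (-1:ℝ) 1) (hu2 : (1:ℂ) - u^2 ≠ 0) :
    Complex.abs (((u + u⁻¹)/2 - (x:ℂ))⁻¹)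
      ≤ 6 * Complex.abs u / (Complex.abs (1 - u^2) * (1 - Complex.abs u)) := by
  have h0 := chebP_approx u hu0 hu1 0 x hx
  have heval0 : (chebP u 0).eval (x:ℂ) = -(2*u/(1-u^2)) := by
    simp [chebP]
  have hα : 0 < Complex.abs u := Complex.abs.pos hu0
  have hD : 0 < Complex.abs (1 - u^2) := Complex.abs.pos hu2
  have h1α : 0 < 1 - Complex.abs u := by linarith
  have habs0 : Complex.abs ((chebP u 0).eval (x:ℂ)) = 2 * Complex.abs u / Complex.abs (1-u^2) := by
    rw [heval0, Complex.abs.map_neg, _root_.map_div₀, _root_.map_mul, Complex.abs_two]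
  have htri : Complex.abs (((u + u⁻¹)/2 - (x:ℂ))⁻¹)
      ≤ Complex.abs (((u + u⁻¹)/2 - (x:ℂ))⁻¹ - (chebP u 0).eval (x:ℂ))
        + Complex.abs ((chebP u 0).eval (x:ℂ)) := by
    have := Complex.abs.sub_le (((u + u⁻¹)/2 - (x:ℂ))⁻¹) ((chebP u 0).eval (x:ℂ)) 0
    simpa using this
  rw [pow_zero, mul_one] at h0
  rw [habs0] at htri
  have hstep : 2 * Complex.abs u / Complex.abs (1-u^2)
      ≤ 2 * Complex.abs u / (Complex.abs (1-u^2) * (1 - Complex.abs u)) := by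
    apply div_le_div_of_nonneg_left (by positivity) (by positivity)
    nlinarith
  have heq : 4 * Complex.abs u / (Complex.abs (1 - u^2) * (1 - Complex.abs u))
      + 2 * Complex.abs u / (Complex.abs (1-u^2) * (1 - Complex.abs u))
      = 6 * Complex.abs u / (Complex.abs (1 - u^2) * (1 - Complex.abs u)) := by
    field_simp
    ring
  linarith

lemma scalar_bound (u : ℂ) (hu0 : u ≠ 0) (hu1 : Complex.abs u < 1) (hu2 : (1:ℂ) - u^2 ≠ 0)
    (m : ℕ) (x : ℝ) (hx : x ∈ Set.Icc (-1:ℝ) 1) :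
    Complex.abs (((u + u⁻¹)/2 - (x:ℂ))⁻¹
        - (if m = 0 then (0 : Polynomial ℂ) else chebP u m).eval (x:ℂ))
      ≤ 6 * Complex.abs u / (Complex.abs (1 - u^2) * (1 - Complex.abs u)) * Complex.abs u ^ m := by
  have hα : 0 < Complex.abs u := Complex.abs.pos hu0
  have hD : 0 < Complex.abs (1 - u^2) := Complex.abs.pos hu2
  have h1α : 0 < 1 - Complex.abs u := by linarith
  split_ifs with h
  · subst h
    rw [Polynomial.eval_zero, sub_zero, pow_zero, mul_one]
    exact inv_bound u hu0 hu1 x hx hu2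
  · refine (chebP_approx u hu0 hu1 m x hx).trans ?_
    have : 4 * Complex.abs u / (Complex.abs (1 - u^2) * (1 - Complex.abs u))
        ≤ 6 * Complex.abs u / (Complex.abs (1 - u^2) * (1 - Complex.abs u)) := by
      apply div_le_div_of_nonneg_right ?_ (by positivity)
      linarith
    exact mul_le_mul_of_nonneg_right this (by positivity)


/-- Exponential localization of the resolvent: for `z` off the
interval `[a,b]`, there are constants `C > 0` and `ρ > 1`, depending only on
`z, a, b` — explicitly `ρ = |w + √(w²−1)|` with `w = (2z−(b+a))/(b−a)` and the
branch of the square root chosen so that `ρ ≥ 1` — such that for every Hermitian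
matrix `H` with spectrum in `[a,b]` and indices `i,j` at graph distance at least
`m`, `|(H − zI)⁻¹(i,j)| ≤ C·ρ^{−m}`. -/
theorem resolvent_entry_exponential_decay (a b : ℝ) (hab : a < b)
    (z : ℂ) (hz : z ∉ Complex.ofReal '' Set.Icc a b) :
    ∃ C : ℝ, 0 < C ∧ ∃ ρ : ℝ, 1 < ρ ∧
      ρ = max
        (‖(2 * z - (b + a)) / (b - a) +
          (((2 * z - (b + a)) / (b - a)) ^ 2 - 1) ^ ((1 : ℂ) / 2)‖)
        (‖(2 * z - (b + a)) / (b - a) -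
          (((2 * z - (b + a)) / (b - a)) ^ 2 - 1) ^ ((1 : ℂ) / 2)‖) ∧
      ∀ (n : ℕ) (H : Matrix (Fin n) (Fin n) ℂ) (hH : H.IsHermitian),
        (∀ k : Fin n, hH.eigenvalues k ∈ Set.Icc a b) →
        ∀ (i j : Fin n) (m : ℕ),
          (∀ w : (matGraph H).Walk i j, m ≤ w.length) →
          ‖(H - z • 1)⁻¹ i j‖ ≤ C / ρ ^ m := by
  have hba : (0:ℝ) < b - a := sub_pos.mpr hab
  have hbaC : ((b:ℂ) - a) ≠ 0 := by
    intro h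
    have : (b:ℂ) = a := by linear_combination h
    exact absurd (by exact_mod_cast this) (ne_of_gt hab)
  set w : ℂ := (2 * z - ((b:ℂ) + (a:ℂ))) / ((b:ℂ) - (a:ℂ)) with hwdef
  have hwreal : ∀ x : ℝ, x ∈ Set.Icc (-1:ℝ) 1 → w ≠ (x:ℂ) := by
    intro x hx heq
    apply hz
    refine ⟨((b-a)*x + (b+a))/2, ⟨by nlinarith [hx.1, hx.2], by nlinarith [hx.1, hx.2]⟩, ?_⟩
    rw [hwdef, div_eq_iff hbaC] at heq
    push_cast
    linear_combination (-(1:ℂ)/2) * heq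
  set s : ℂ := (w^2 - 1) ^ ((1:ℂ)/2) with hsdef
  have hw21 : w^2 - 1 ≠ 0 := by
    intro h
    have h2 : (w - 1) * (w + 1) = 0 := by linear_combination h
    rcases mul_eq_zero.mp h2 with h3 | h3
    · exact hwreal 1 (by norm_num) (by push_cast; linear_combination h3)
    · exact hwreal (-1) (by norm_num) (by push_cast; linear_combination h3)
  have hs2 : s^2 = w^2 - 1 := by
    rw [hsdef, sq, ← Complex.cpow_add _ _ hw21]
    norm_num
  have hprod : (w + s) * (w - s) = 1 := by linear_combination -hs2
  have habs : Complex.abs (w+s) * Complex.abs (w-s) = 1 := by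
    rw [← _root_.map_mul, hprod, _root_.map_one]
  set ρ : ℝ := max (Complex.abs (w+s)) (Complex.abs (w-s)) with hρdef
  have hρ1 : 1 < ρ := by
    rw [hρdef]
    by_contra hle
    push_neg at hle
    have hA : Complex.abs (w+s) ≤ 1 := le_trans (le_max_left _ _) hle
    have hB : Complex.abs (w-s) ≤ 1 := le_trans (le_max_right _ _) hle
    have hA1 : Complex.abs (w+s) = 1 := by
      nlinarith [Complex.abs.nonneg (w+s), Complex.abs.nonneg (w-s)]
    have hc0 : w + s ≠ 0 := by intro h; rw [h] at hA1; simp at hA1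
    have hconj : w - s = (starRingEnd ℂ) (w+s) := by
      apply mul_left_cancel₀ hc0
      rw [hprod, Complex.mul_conj, ← Complex.ofReal_one]
      norm_cast
      rw [← Complex.sq_abs, hA1]; norm_num
    have hwre : w = (((w+s).re : ℝ) : ℂ) := by
      have h4 := Complex.add_conj (w+s)
      rw [← hconj] at h4
      push_cast at h4
      linear_combination ((1:ℂ)/2) * h4
    have habsre := Complex.abs_re_le_abs (w+s)
    rw [hA1] at habsre
    exact hwreal (w+s).re ⟨neg_le_of_abs_le habsre, le_of_abs_le habsre⟩ hwre
  have hρ0 : 0 < ρ := lt_trans one_pos hρ1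
  set u : ℂ := if Complex.abs (w-s) ≤ Complex.abs (w+s) then w-s else w+s with hudef
  have hu0 : u ≠ 0 := by
    rw [hudef]; split_ifs <;> intro h <;> rw [h] at habs <;> simp at habs
  have huρ : Complex.abs u * ρ = 1 := by
    rw [hudef, hρdef]; split_ifs with h
    · rw [max_eq_left h, mul_comm]; exact habs
    · rw [max_eq_right (le_of_not_ge h)]; exact habs
  have huw : u + u⁻¹ = 2 * w := by
    rw [hudef]; split_ifs
    · rw [inv_eq_of_mul_eq_one_right (by linear_combination hprod : (w-s)*(w+s) = 1)]; ring
    · rw [inv_eq_of_mul_eq_one_right hprod]; ring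
  have hα : Complex.abs u = ρ⁻¹ := by
    calc Complex.abs u = Complex.abs u * ρ * ρ⁻¹ := by field_simp
      _ = ρ⁻¹ := by rw [huρ, one_mul]
  have hu1 : Complex.abs u < 1 := by
    rw [hα]
    exact inv_lt_one_of_one_lt₀ hρ1
  have hu2 : (1:ℂ) - u^2 ≠ 0 := by
    intro h
    have h2 : u^2 = 1 := by linear_combination -h
    have h3 : Complex.abs u ^ 2 = 1 := by rw [← _root_.map_pow, h2, _root_.map_one]
    nlinarith [Complex.abs.nonneg u]
  have hαpos : 0 < Complex.abs u := Complex.abs.pos hu0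
  have hDpos : 0 < Complex.abs (1 - u^2) := Complex.abs.pos hu2
  have h1α : 0 < 1 - Complex.abs u := by linarith
  set C : ℝ := (2/(b-a)) * (6 * Complex.abs u / (Complex.abs (1-u^2) * (1 - Complex.abs u)))
    with hCdef
  have hC : 0 < C := by
    rw [hCdef]; positivity
  refine ⟨C, hC, ρ, hρ1, rfl, ?_⟩
  intro n H hH hspecIcc i j m hwalk
  set U : Matrix (Fin n) (Fin n) ℂ := (hH.eigenvectorUnitary : Matrix (Fin n) (Fin n) ℂ)
    with hUdef
  have hU1 : U * Uᴴ = 1 := by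
    rw [hUdef, ← Matrix.star_eq_conjTranspose]
    exact Unitary.coe_mul_star_self _
  have hU2 : Uᴴ * U = 1 := by
    rw [hUdef, ← Matrix.star_eq_conjTranspose]
    exact Unitary.coe_star_mul_self _
  have hspec : H = U * Matrix.diagonal (fun k => ((hH.eigenvalues k : ℝ) : ℂ)) * Uᴴ := by
    have h := hH.spectral_theorem
    rw [← Matrix.star_eq_conjTranspose, hUdef]
    exact h
  have hφmul : ∀ d e : Fin n → ℂ, (U * Matrix.diagonal d * Uᴴ) * (U * Matrix.diagonal e * Uᴴ)
      = U * Matrix.diagonal (fun k => d k * e k) * Uᴴ := by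
    intro d e
    simp only [Matrix.mul_assoc]
    rw [← Matrix.mul_assoc Uᴴ U, hU2, Matrix.one_mul,
      ← Matrix.mul_assoc (Matrix.diagonal d), Matrix.diagonal_mul_diagonal]
  have hφadd : ∀ d e : Fin n → ℂ, (U * Matrix.diagonal d * Uᴴ) + (U * Matrix.diagonal e * Uᴴ)
      = U * Matrix.diagonal (fun k => d k + e k) * Uᴴ := by
    intro d e
    rw [← Matrix.diagonal_add, Matrix.mul_add, Matrix.add_mul]
  have hφsmul : ∀ (c : ℂ) (d : Fin n → ℂ), c • (U * Matrix.diagonal d * Uᴴ)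
      = U * Matrix.diagonal (fun k => c * d k) * Uᴴ := by
    intro c d
    rw [show (fun k => c * d k) = c • d from rfl, Matrix.diagonal_smul]
    rw [Matrix.mul_smul, Matrix.smul_mul]
  have hφsub : ∀ d e : Fin n → ℂ, (U * Matrix.diagonal d * Uᴴ) - (U * Matrix.diagonal e * Uᴴ)
      = U * Matrix.diagonal (fun k => d k - e k) * Uᴴ := by
    intro d e
    rw [← Matrix.sub_mul, ← Matrix.mul_sub, Matrix.diagonal_sub]
  have hφone : U * Matrix.diagonal (fun _ : Fin n => (1:ℂ)) * Uᴴ = 1 := by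
    rw [Matrix.diagonal_one, Matrix.mul_one, hU1]
  have hφpow : ∀ (d : Fin n → ℂ) (k : ℕ),
      (U * Matrix.diagonal d * Uᴴ)^k = U * Matrix.diagonal (fun t => d t ^ k) * Uᴴ := by
    intro d k
    induction k with
    | zero =>
      simp only [pow_zero]
      rw [hφone]
    | succ k ih =>
      rw [pow_succ, ih, hφmul,
        show (fun t => d t ^ k * d t) = (fun t => d t ^ (k+1)) from
          funext fun t => (pow_succ _ _).symm]
  have hlamz : ∀ k, ((hH.eigenvalues k : ℝ) : ℂ) - z ≠ 0 := by
    intro k h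
    exact hz ⟨hH.eigenvalues k, hspecIcc k, by linear_combination h⟩
  have hres : (H - z • 1)⁻¹
      = U * Matrix.diagonal (fun k => (((hH.eigenvalues k : ℝ) : ℂ) - z)⁻¹) * Uᴴ := by
    have hone : (z • 1 : Matrix (Fin n) (Fin n) ℂ)
        = U * Matrix.diagonal (fun _ : Fin n => z) * Uᴴ := by
      rw [show (fun _ : Fin n => z) = fun k => z * (1:ℂ) from funext fun k => (mul_one z).symm,
        ← hφsmul, hφone]
    have hsub : H - z • 1
        = U * Matrix.diagonal (fun k => ((hH.eigenvalues k : ℝ) : ℂ) - z) * Uᴴ := by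
      conv_lhs => rw [hspec]
      rw [hone, hφsub]
    rw [hsub]
    apply Matrix.inv_eq_right_inv
    rw [hφmul, show (fun k => (((hH.eigenvalues k : ℝ) : ℂ) - z)
        * (((hH.eigenvalues k : ℝ) : ℂ) - z)⁻¹) = fun _ => (1:ℂ)
      from funext fun k => mul_inv_cancel₀ (hlamz k), hφone]
  set xr : Fin n → ℝ := fun k => (2 * hH.eigenvalues k - (b+a))/(b-a) with hxrdef
  have hxrIcc : ∀ k, xr k ∈ Set.Icc (-1:ℝ) 1 := by
    intro k
    have h1 := (hspecIcc k).1
    have h2 := (hspecIcc k).2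
    constructor
    · rw [hxrdef, le_div_iff₀ hba]; linarith
    · rw [hxrdef, div_le_iff₀ hba]; linarith
  set X : Matrix (Fin n) (Fin n) ℂ := U * Matrix.diagonal (fun k => ((xr k : ℝ) : ℂ)) * Uᴴ
    with hXdef
  have hXH : X = (2/((b:ℂ)-a)) • H - (((b:ℂ)+a)/((b:ℂ)-a)) • 1 := by
    rw [hXdef]
    conv_rhs => rw [hspec]
    rw [hφsmul]
    have hone1 : ((((b:ℂ)+a)/((b:ℂ)-a)) • (1 : Matrix (Fin n) (Fin n) ℂ))
        = U * Matrix.diagonal (fun _ : Fin n => ((b:ℂ)+a)/((b:ℂ)-a)) * Uᴴ := by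
      rw [show (fun _ : Fin n => ((b:ℂ)+a)/((b:ℂ)-a))
          = fun k => (((b:ℂ)+a)/((b:ℂ)-a)) * (1:ℂ) from funext fun k => (mul_one _).symm,
        ← hφsmul, hφone]
    rw [hone1, hφsub]
    refine congrArg (fun d => U * Matrix.diagonal d * Uᴴ) (funext fun k => ?_)
    show ((xr k : ℝ) : ℂ) = 2/((b:ℂ)-a) * ((hH.eigenvalues k : ℝ) : ℂ) - ((b:ℂ)+a)/((b:ℂ)-a)
    simp only [hxrdef]
    push_cast
    field_simp
  set p : Polynomial ℂ := if m = 0 then 0 else chebP u m with hpdef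
  have hpdeg : p.natDegree < max m 1 := by
    rw [hpdef]; split_ifs with h
    · simp
    · obtain ⟨m', rfl⟩ : ∃ m', m = m' + 1 := ⟨m - 1, by omega⟩
      have := chebP_natDegree_le u m'
      omega
  have haevalX : Polynomial.aeval X p
      = U * Matrix.diagonal (fun k => p.eval ((xr k : ℝ) : ℂ)) * Uᴴ := by
    rw [Polynomial.aeval_eq_sum_range]
    have hsums : ∀ N : ℕ, ∑ t ∈ Finset.range N, p.coeff t • X^t
        = U * Matrix.diagonal
            (fun k => ∑ t ∈ Finset.range N, p.coeff t * ((xr k : ℝ) : ℂ)^t) * Uᴴ := by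
      intro N
      induction N with
      | zero =>
        simp only [Finset.range_zero, Finset.sum_empty]
        rw [Matrix.diagonal_zero, Matrix.mul_zero, Matrix.zero_mul]
      | succ N ih =>
        rw [Finset.sum_range_succ, ih, hXdef, hφpow, hφsmul, hφadd]
        exact congrArg (fun d => U * Matrix.diagonal d * Uᴴ)
          (funext fun k => (Finset.sum_range_succ _ _).symm)
    rw [hsums]
    exact congrArg (fun d => U * Matrix.diagonal d * Uᴴ)
      (funext fun k => (Polynomial.eval_eq_sum_range _).symm)
  have hpXij : (Polynomial.aeval X p) i j = 0 := by
    rcases Nat.eq_zero_or_pos m with hm | hm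
    · rw [hpdef]
      simp [hm]
    · rw [Polynomial.aeval_eq_sum_range, Matrix.sum_apply]
      apply Finset.sum_eq_zero
      intro k hk
      rw [Matrix.smul_apply]
      have hoff : ∀ uu vv : Fin n, uu ≠ vv → X uu vv ≠ 0 → H uu vv ≠ 0 := by
        intro uu vv huv hXuv hHuv
        apply hXuv
        rw [hXH, Matrix.sub_apply, Matrix.smul_apply, Matrix.smul_apply,
          Matrix.one_apply_ne huv, hHuv, smul_zero, smul_zero, sub_zero]
      have hwk : ∀ wlk : (matGraph H).Walk i j, k < wlk.length := by
        intro wlk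
        have h1 := hwalk wlk
        have h2 := Finset.mem_range.mp hk
        omega
      rw [pow_entry_zero H X hoff i k j hwk, smul_zero]
  have hw2 : w = (u + u⁻¹)/2 := by linear_combination (-(1:ℂ)/2) * huw
  have hgk : ∀ k, Complex.abs ((((hH.eigenvalues k : ℝ) : ℂ) - z)⁻¹
      + (2/((b:ℂ)-a)) * p.eval ((xr k : ℝ) : ℂ)) ≤ C * Complex.abs u ^ m := by
    intro k
    have hwxr : ((hH.eigenvalues k : ℝ) : ℂ) - z
        = (((b:ℂ)-a)/2) * (((xr k : ℝ) : ℂ) - w) := by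
      rw [hxrdef, hwdef]
      push_cast
      field_simp
      ring
    have h1 : ((((hH.eigenvalues k : ℝ) : ℂ)) - z)⁻¹
        = -((2/((b:ℂ)-a)) * ((w - ((xr k : ℝ) : ℂ))⁻¹)) := by
      rw [hwxr, mul_inv, inv_div,
        show ((xr k : ℝ) : ℂ) - w = -(w - ((xr k : ℝ) : ℂ)) from by ring, inv_neg]
      ring
    rw [h1, show -((2/((b:ℂ)-a)) * ((w - ((xr k : ℝ) : ℂ))⁻¹))
        + (2/((b:ℂ)-a)) * p.eval ((xr k : ℝ) : ℂ)
        = -((2/((b:ℂ)-a)) * ((w - ((xr k : ℝ) : ℂ))⁻¹ - p.eval ((xr k : ℝ) : ℂ))) from by ring]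
    rw [Complex.abs.map_neg, _root_.map_mul]
    have hcabs : Complex.abs (2/((b:ℂ)-a)) = 2/(b-a) := by
      rw [show (2/((b:ℂ)-a)) = (((2/(b-a) : ℝ)) : ℂ) from by push_cast; ring,
        Complex.abs_ofReal, abs_of_pos (by positivity)]
    rw [hcabs]
    have hsc := scalar_bound u hu0 hu1 hu2 m (xr k) (hxrIcc k)
    rw [← hpdef, ← hw2] at hsc
    rw [hCdef]
    calc 2/(b-a) * Complex.abs ((w - ((xr k : ℝ) : ℂ))⁻¹ - p.eval ((xr k : ℝ) : ℂ))
        ≤ 2/(b-a) * (6 * Complex.abs u / (Complex.abs (1-u^2) * (1 - Complex.abs u))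
            * Complex.abs u ^ m) := by
          exact mul_le_mul_of_nonneg_left hsc (by positivity)
      _ = 2/(b-a) * (6 * Complex.abs u / (Complex.abs (1-u^2) * (1 - Complex.abs u)))
            * Complex.abs u ^ m := by ring
  have hsum : (H - z • 1)⁻¹ + (2/((b:ℂ)-a)) • Polynomial.aeval X p
      = U * Matrix.diagonal (fun k => (((hH.eigenvalues k : ℝ) : ℂ) - z)⁻¹
          + (2/((b:ℂ)-a)) * p.eval ((xr k : ℝ) : ℂ)) * Uᴴ := by
    rw [hres, haevalX, hφsmul, hφadd]
  have hfinal := entry_bound U hU1 _ (C * Complex.abs u ^ m) hgk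
    (mul_nonneg hC.le (pow_nonneg (Complex.abs.nonneg u) m)) i j
  rw [← hsum, Matrix.add_apply, Matrix.smul_apply, hpXij, smul_zero, add_zero] at hfinal
  rw [hα, inv_pow, ← div_eq_mul_inv] at hfinal
  exact hfinal
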